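/- Let σ be an endomorphism of a ring R, S = R[x;σ] the skew polynomial ring with xr = σ(r)x, and I an ideal of R with σ(I) ⊆ I. Then IS is a prime ideal of S if and only if for every left ideal A of R and every ideal B of R with σ(B) ⊆ B, if A·σ^p(B) ⊆ I for some p ∈ ℕ then A ⊆ I or B ⊆ I. -/

import Mathlib

open Pointwise

/-- A left ideal of a ring, as a set. -/
def IsLeftIdealSet {R : Type*} [Ring R] (I : Set R) : Prop :=
  (0 : R) ∈ I ∧ (∀ a ∈ I, ∀ b ∈ I, a + b ∈ I) ∧ (∀ a ∈ I, -a ∈ I) ∧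
    (∀ a ∈ I, ∀ r : R, r * a ∈ I)

/-- A two-sided ideal of a ring, as a set. -/
def IsIdealSet {R : Type*} [Ring R] (I : Set R) : Prop :=
  (0 : R) ∈ I ∧ (∀ a ∈ I, ∀ b ∈ I, a + b ∈ I) ∧ (∀ a ∈ I, -a ∈ I) ∧
    (∀ a ∈ I, ∀ r : R, r * a ∈ I ∧ a * r ∈ I)

/-- The skew polynomial "standard form" map, as an additive monoid hom. -/
private noncomputable def PhiAux {R S : Type*} [Ring R] [Ring S] (ι : R →+* S) (x : S) :
    (ℕ →₀ R) →+ S where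
  toFun f := f.sum fun n r => ι r * x ^ n
  map_zero' := Finsupp.sum_zero_index
  map_add' f g := by
    show (f + g).sum (fun n r => ι r * x ^ n) = _
    exact Finsupp.sum_add_index (fun a _ => by simp) (fun a _ b₁ b₂ => by rw [map_add, add_mul])

set_option maxHeartbeats 1000000 in
/-- Let `σ` be an endomorphism of `R` and `S = R[x;σ]` the skew polynomial ring
(`S` is free as a left `R`-module on the powers of `x`, with `x r = σ(r) x`), and
let `I` be an ideal of `R` with `σ(I) ⊆ I`.  Then `IS` is a prime ideal of `S` iff
`I` is proper and for every left ideal `A` of `R` and every ideal `B` of `R` with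
`σ(B) ⊆ B`, `A·σ^p(B) ⊆ I` for some `p ∈ ℕ` implies `A ⊆ I` or `B ⊆ I`. -/
theorem stmt19 {R S : Type*} [Ring R] [Ring S]
    (σ : R →+* R) (ι : R →+* S) (x : S)
    (hx : ∀ r : R, x * ι r = ι (σ r) * x)
    (hfree : Function.Bijective fun f : ℕ →₀ R => f.sum fun n r => ι r * x ^ n)
    (I : Set R) (hI : IsIdealSet I) (hstab : ∀ a ∈ I, σ a ∈ I) :
    ((1 : S) ∉ AddSubgroup.closure ((ι '' I) * (Set.univ : Set S)) ∧
      ∀ a b : S,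
        (∀ s : S, a * s * b ∈ AddSubgroup.closure ((ι '' I) * (Set.univ : Set S))) →
        a ∈ AddSubgroup.closure ((ι '' I) * (Set.univ : Set S)) ∨
        b ∈ AddSubgroup.closure ((ι '' I) * (Set.univ : Set S))) ↔
    ((1 : R) ∉ I ∧
      ∀ A B : Set R, IsLeftIdealSet A → IsIdealSet B → (∀ b ∈ B, σ b ∈ B) →
        (∃ p : ℕ, ∀ a ∈ A, ∀ b ∈ B, a * (⇑σ)^[p] b ∈ I) →
        A ⊆ I ∨ B ⊆ I) := by
  classical
  obtain ⟨hI0, hIadd, hIneg, hImul⟩ := hI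
  set J : AddSubgroup S := AddSubgroup.closure ((ι '' I) * (Set.univ : Set S)) with hJdef
  -- basic facts about iterates of σ
  have hpow : ∀ t : ℕ, (⇑σ)^[t] = ⇑(σ ^ t) := fun t => (RingHom.coe_pow σ t).symm
  have iter_mul : ∀ (t : ℕ) (u v : R), (⇑σ)^[t] (u * v) = (⇑σ)^[t] u * (⇑σ)^[t] v :=
    fun t u v => by rw [hpow, map_mul]
  have iter_one : ∀ t : ℕ, (⇑σ)^[t] (1 : R) = 1 := fun t => by rw [hpow, map_one]
  have iter_zero : ∀ t : ℕ, (⇑σ)^[t] (0 : R) = 0 := fun t => by rw [hpow, map_zero]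
  have iter_add : ∀ (t : ℕ) (u v : R), (⇑σ)^[t] (u + v) = (⇑σ)^[t] u + (⇑σ)^[t] v :=
    fun t u v => by rw [hpow, map_add]
  have iter_neg : ∀ (t : ℕ) (u : R), (⇑σ)^[t] (-u) = -((⇑σ)^[t] u) :=
    fun t u => by rw [hpow, map_neg]
  have iterI : ∀ (t : ℕ), ∀ c ∈ I, (⇑σ)^[t] c ∈ I := by
    intro t
    induction t with
    | zero => intro c hc; simpa using hc
    | succ t ih =>
      intro c hc; rw [Function.iterate_succ_apply']; exact hstab _ (ih c hc)
  have sumI : ∀ (t : Finset ℕ) (f : ℕ → R), (∀ i ∈ t, f i ∈ I) → (∑ i ∈ t, f i) ∈ I :=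
    fun t f hf => Finset.sum_induction f (· ∈ I) (fun u v hu hv => hIadd u hu v hv) hI0 hf
  -- the coefficient equivalence
  let e : (ℕ →₀ R) ≃+ S := AddEquiv.ofBijective (PhiAux ι x) (by exact hfree)
  have he : ∀ f : ℕ →₀ R, e f = f.sum fun n r => ι r * x ^ n := fun f => rfl
  have hxpow : ∀ (i : ℕ) (r : R), x ^ i * ι r = ι ((⇑σ)^[i] r) * x ^ i := by
    intro i
    induction i with
    | zero => intro r; simp
    | succ i ih =>
      intro r
      rw [pow_succ', mul_assoc, ih, ← mul_assoc, hx, Function.iterate_succ_apply',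
        mul_assoc, ← pow_succ']
  have hmul2 : ∀ (u v : R) (i j : ℕ),
      (ι u * x ^ i) * (ι v * x ^ j) = ι (u * (⇑σ)^[i] v) * x ^ (i + j) := by
    intro u v i j
    rw [mul_assoc, ← mul_assoc (x ^ i), hxpow, mul_assoc, ← pow_add, ← mul_assoc, ← map_mul]
  have hmul3 : ∀ (u r v : R) (i k j : ℕ),
      (ι u * x ^ i) * (ι r * x ^ k) * (ι v * x ^ j) =
        ι (u * (⇑σ)^[i] r * (⇑σ)^[i + k] v) * x ^ (i + k + j) := by
    intro u r v i k j
    rw [hmul2, hmul2]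
  have hsingle : ∀ (c : R) (t : ℕ), e.symm (ι c * x ^ t) = Finsupp.single t c := by
    intro c t
    apply e.injective
    rw [e.apply_symm_apply, he, Finsupp.sum_single_index (by simp)]
  have hrepr : ∀ s : S, s = ∑ i ∈ (e.symm s).support, ι (e.symm s i) * x ^ i := by
    intro s
    conv_lhs => rw [← e.apply_symm_apply s]
    rw [he]
    rfl
  have hcsum : ∀ (t : Finset ℕ) (u : ℕ → S) (nn : ℕ),
      e.symm (∑ i ∈ t, u i) nn = ∑ i ∈ t, e.symm (u i) nn := by
    intro t u nn
    rw [map_sum, Finset.sum_apply']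
  -- membership in J in terms of coefficients
  have hJ1 : ∀ s ∈ J, ∀ nn, e.symm s nn ∈ I := by
    intro s hs
    induction hs using AddSubgroup.closure_induction with
    | mem y hy =>
      obtain ⟨y', ⟨c, hc, rfl⟩, t, -, rfl⟩ := Set.mem_mul.1 hy
      intro nn
      have hexp : ι c * t = ∑ i ∈ (e.symm t).support, ι (c * e.symm t i) * x ^ i := by
        conv_lhs => rw [hrepr t]
        rw [Finset.mul_sum]
        exact Finset.sum_congr rfl fun i _ => by rw [← mul_assoc, ← map_mul]
      rw [hexp, hcsum]
      refine sumI _ _ fun i _ => ?_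
      rw [hsingle, Finsupp.single_apply]
      split
      · exact (hImul _ hc _).2
      · exact hI0
    | zero => intro nn; simp only [map_zero, Finsupp.coe_zero, Pi.zero_apply]; exact hI0
    | add y z hy hz ihy ihz =>
      intro nn
      rw [map_add, Finsupp.add_apply]
      exact hIadd _ (ihy nn) _ (ihz nn)
    | neg y hy ihy =>
      intro nn
      rw [map_neg, Finsupp.neg_apply]
      exact hIneg _ (ihy nn)
  have hJ2 : ∀ s : S, (∀ nn, e.symm s nn ∈ I) → s ∈ J := by
    intro s hs
    rw [hrepr s]
    exact AddSubgroup.sum_mem _ fun i _ =>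
      AddSubgroup.subset_closure ⟨ι (e.symm s i), ⟨_, hs i, rfl⟩, x ^ i, trivial, rfl⟩
  have hcoeff1 : ∀ nn : ℕ, e.symm (1 : S) nn = if 0 = nn then 1 else 0 := by
    intro nn
    have : (1 : S) = ι 1 * x ^ 0 := by simp
    rw [this, hsingle, Finsupp.single_apply]
  constructor
  · -- prime ⊆> condition
    rintro ⟨h1, hprime⟩
    constructor
    · intro h1I
      exact h1 (AddSubgroup.subset_closure ⟨ι 1, ⟨1, h1I, rfl⟩, 1, trivial, by simp⟩)
    · intro A B hA hB hBs ⟨p, hp⟩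
      by_contra hc
      push_neg at hc
      obtain ⟨hAI, hBI⟩ := hc
      obtain ⟨aa, haA, haI⟩ := Set.not_subset.1 hAI
      obtain ⟨bb, hbB, hbI⟩ := Set.not_subset.1 hBI
      have iterB : ∀ (t : ℕ), ∀ c ∈ B, (⇑σ)^[t] c ∈ B := by
        intro t
        induction t with
        | zero => intro c hc; simpa using hc
        | succ t ih => intro c hc; rw [Function.iterate_succ_apply']; exact hBs _ (ih c hc)
      have hpres : ∀ s : S, (ι aa * x ^ p) * s * ι bb ∈ J := by
        intro s
        have hbb0 : ι bb = ι bb * x ^ 0 := by rw [pow_zero, mul_one]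
        have expand : (ι aa * x ^ p) * s * ι bb =
            ∑ i ∈ (e.symm s).support,
              ι (aa * (⇑σ)^[p] (e.symm s i) * (⇑σ)^[p + i] bb) * x ^ (p + i + 0) := by
          conv_lhs => rw [hrepr s]
          rw [Finset.mul_sum, Finset.sum_mul]
          refine Finset.sum_congr rfl fun i _ => ?_
          rw [hbb0, hmul3]
        rw [hJdef, expand]
        refine AddSubgroup.sum_mem _ fun i _ => AddSubgroup.subset_closure ?_
        have hd : aa * (⇑σ)^[p] (e.symm s i) * (⇑σ)^[p + i] bb ∈ I := by
          have heq : aa * (⇑σ)^[p] (e.symm s i) * (⇑σ)^[p + i] bb =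
              aa * (⇑σ)^[p] (e.symm s i * (⇑σ)^[i] bb) := by
            rw [iter_mul, Function.iterate_add_apply, mul_assoc]
          rw [heq]
          exact hp aa haA _ (hB.2.2.2 _ (iterB i bb hbB) (e.symm s i)).1
        exact ⟨_, ⟨_, hd, rfl⟩, x ^ (p + i + 0), trivial, rfl⟩
      rcases hprime _ _ hpres with h | h
      · have := hJ1 _ h p
        rw [hsingle, Finsupp.single_apply, if_pos rfl] at this
        exact haI this
      · have := hJ1 _ h 0
        rw [show ι bb = ι bb * x ^ 0 by rw [pow_zero, mul_one], hsingle,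
          Finsupp.single_apply, if_pos rfl] at this
        exact hbI this
  · -- condition ⊆> prime
    rintro ⟨h1, hcond⟩
    constructor
    · intro h1J
      have := hJ1 _ h1J 0
      rw [hcoeff1 0, if_pos rfl] at this
      exact h1 this
    · intro a b hab
      by_contra hc
      push_neg at hc
      obtain ⟨haJ, hbJ⟩ := hc
      -- maximal coefficient of a not in I
      have haJ' : ∃ nn, e.symm a nn ∉ I := by
        by_contra h; push_neg at h; exact haJ (hJ2 a h)
      have hbJ' : ∃ nn, e.symm b nn ∉ I := by
        by_contra h; push_neg at h; exact hbJ (hJ2 b h)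
      set fa := (e.symm a).support.filter (fun i => e.symm a i ∉ I) with hfa
      set fb := (e.symm b).support.filter (fun i => e.symm b i ∉ I) with hfb
      have hfane : fa.Nonempty := by
        obtain ⟨nn, hnn⟩ := haJ'
        exact ⟨nn, Finset.mem_filter.2 ⟨Finsupp.mem_support_iff.2 (fun h0 => hnn (h0 ▸ hI0)), hnn⟩⟩
      have hfbne : fb.Nonempty := by
        obtain ⟨nn, hnn⟩ := hbJ'
        exact ⟨nn, Finset.mem_filter.2 ⟨Finsupp.mem_support_iff.2 (fun h0 => hnn (h0 ▸ hI0)), hnn⟩⟩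
      set n := fa.max' hfane with hn
      set m := fb.max' hfbne with hm
      have hanI : e.symm a n ∉ I := (Finset.mem_filter.1 (fa.max'_mem hfane)).2
      have hbmI : e.symm b m ∉ I := (Finset.mem_filter.1 (fb.max'_mem hfbne)).2
      have hamax : ∀ i, n < i → e.symm a i ∈ I := by
        intro i hi
        by_contra hiI
        have : i ∈ fa := Finset.mem_filter.2
          ⟨Finsupp.mem_support_iff.2 (fun h0 => hiI (h0 ▸ hI0)), hiI⟩
        exact absurd (fa.le_max' i this) (not_le.2 hi)
      have hbmax : ∀ j, m < j → e.symm b j ∈ I := by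
        intro j hj
        by_contra hjI
        have : j ∈ fb := Finset.mem_filter.2
          ⟨Finsupp.mem_support_iff.2 (fun h0 => hjI (h0 ▸ hI0)), hjI⟩
        exact absurd (fb.le_max' j this) (not_le.2 hj)
      have hnsupp : n ∈ (e.symm a).support := (Finset.mem_filter.1 (fa.max'_mem hfane)).1
      have hmsupp : m ∈ (e.symm b).support := (Finset.mem_filter.1 (fb.max'_mem hfbne)).1
      -- the key computation
      have key : ∀ (r : R) (k : ℕ),
          e.symm a n * (⇑σ)^[n] r * (⇑σ)^[n + k] (e.symm b m) ∈ I := by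
        intro r k
        have hprod : a * (ι r * x ^ k) * b =
            ∑ i ∈ (e.symm a).support, ∑ j ∈ (e.symm b).support,
              ι (e.symm a i * (⇑σ)^[i] r * (⇑σ)^[i + k] (e.symm b j)) * x ^ (i + k + j) := by
          conv_lhs => rw [hrepr a, hrepr b]
          rw [Finset.sum_mul, Finset.sum_mul]
          refine Finset.sum_congr rfl fun i _ => ?_
          rw [Finset.mul_sum]
          exact Finset.sum_congr rfl fun j _ => hmul3 _ _ _ _ _ _
        have hD : e.symm (a * (ι r * x ^ k) * b) (n + k + m) =
            ∑ i ∈ (e.symm a).support, ∑ j ∈ (e.symm b).support,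
              (if i + k + j = n + k + m then
                e.symm a i * (⇑σ)^[i] r * (⇑σ)^[i + k] (e.symm b j) else 0) := by
          rw [hprod, hcsum]
          refine Finset.sum_congr rfl fun i _ => ?_
          rw [hcsum]
          refine Finset.sum_congr rfl fun j _ => ?_
          rw [hsingle, Finsupp.single_apply]
        have hDI := hJ1 _ (hab (ι r * x ^ k)) (n + k + m)
        rw [hD] at hDI
        set F : ℕ → R := fun i => ∑ j ∈ (e.symm b).support,
          (if i + k + j = n + k + m then
            e.symm a i * (⇑σ)^[i] r * (⇑σ)^[i + k] (e.symm b j) else 0) with hF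
        have hFn : F n = e.symm a n * (⇑σ)^[n] r * (⇑σ)^[n + k] (e.symm b m) := by
          rw [hF]
          refine (Finset.sum_eq_single_of_mem m hmsupp fun j _ hj => if_neg (by omega)).trans ?_
          rw [if_pos rfl]
        have hrest : (∑ i ∈ (e.symm a).support.erase n, F i) ∈ I := by
          refine sumI _ _ fun i hi => ?_
          have hine : i ≠ n := Finset.ne_of_mem_erase hi
          refine sumI _ _ fun j _ => ?_
          split
          · rename_i hij
            rcases lt_or_gt_of_ne hine with hlt | hgt
            · -- i < n, so j > m
              have hjm : m < j := by omega
              exact (hImul _ (iterI (i + k) _ (hbmax j hjm)) _).1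
            · -- i > n
              exact (hImul _ ((hImul _ (hamax i hgt) _).2) _).2
          · exact hI0
        have hsplit : F n + ∑ i ∈ (e.symm a).support.erase n, F i =
            ∑ i ∈ (e.symm a).support, F i := Finset.add_sum_erase _ F hnsupp
        have : F n = (∑ i ∈ (e.symm a).support, F i) +
            -(∑ i ∈ (e.symm a).support.erase n, F i) := by
          rw [← hsplit, add_neg_cancel_right]
        rw [← hFn, this]
        exact hIadd _ hDI _ (hIneg _ hrest)
      -- build the left ideal A and two-sided σ-stable ideal B
      set an := e.symm a n with han
      set bm := e.symm b m with hbm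
      set GA : Set R := {y | ∃ r : R, y = an * (⇑σ)^[n] r} with hGA
      set GB : Set R := {y | ∃ u v : R, ∃ t : ℕ, y = u * (⇑σ)^[t] bm * v} with hGB
      set A : Set R := (Submodule.span R GA : Set R) with hA
      set B : Set R := (AddSubgroup.closure GB : Set R) with hB
      have hAleft : IsLeftIdealSet A := by
        refine ⟨Submodule.zero_mem _, fun u hu v hv => Submodule.add_mem _ hu hv,
          fun u hu => Submodule.neg_mem _ hu, fun u hu r => ?_⟩
        have := Submodule.smul_mem (Submodule.span R GA) r hu
        rwa [smul_eq_mul] at this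
      have hBl : ∀ z ∈ AddSubgroup.closure GB, ∀ r : R, r * z ∈ AddSubgroup.closure GB := by
        intro z hz
        induction hz using AddSubgroup.closure_induction with
        | mem y hy =>
          obtain ⟨u, v, t, rfl⟩ := hy
          intro r
          exact AddSubgroup.subset_closure ⟨r * u, v, t, by rw [← mul_assoc, ← mul_assoc]⟩
        | zero => intro r; rw [mul_zero]; exact AddSubgroup.zero_mem _
        | add y z hy hz ihy ihz =>
          intro r; rw [mul_add]; exact AddSubgroup.add_mem _ (ihy r) (ihz r)
        | neg y hy ihy =>
          intro r; rw [mul_neg]; exact AddSubgroup.neg_mem _ (ihy r)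
      have hBr : ∀ z ∈ AddSubgroup.closure GB, ∀ r : R, z * r ∈ AddSubgroup.closure GB := by
        intro z hz
        induction hz using AddSubgroup.closure_induction with
        | mem y hy =>
          obtain ⟨u, v, t, rfl⟩ := hy
          intro r
          exact AddSubgroup.subset_closure ⟨u, v * r, t, by rw [← mul_assoc]⟩
        | zero => intro r; rw [zero_mul]; exact AddSubgroup.zero_mem _
        | add y z hy hz ihy ihz =>
          intro r; rw [add_mul]; exact AddSubgroup.add_mem _ (ihy r) (ihz r)
        | neg y hy ihy =>
          intro r; rw [neg_mul]; exact AddSubgroup.neg_mem _ (ihy r)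
      have hBideal : IsIdealSet B := by
        refine ⟨AddSubgroup.zero_mem _, fun u hu v hv => AddSubgroup.add_mem _ hu hv,
          fun u hu => AddSubgroup.neg_mem _ hu, fun u hu r => ⟨hBl u hu r, hBr u hu r⟩⟩
      have hBstab : ∀ z ∈ B, σ z ∈ B := by
        intro z hz
        induction hz using AddSubgroup.closure_induction with
        | mem y hy =>
          obtain ⟨u, v, t, rfl⟩ := hy
          refine AddSubgroup.subset_closure ⟨σ u, σ v, t + 1, ?_⟩
          rw [map_mul, map_mul, Function.iterate_succ_apply']
        | zero => rw [map_zero]; exact AddSubgroup.zero_mem _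
        | add y z hy hz ihy ihz => rw [map_add]; exact AddSubgroup.add_mem _ ihy ihz
        | neg y hy ihy => rw [map_neg]; exact AddSubgroup.neg_mem _ ihy
      have hanA : an ∈ A := Submodule.subset_span ⟨1, by rw [iter_one, mul_one]⟩
      have hbmB : bm ∈ B := AddSubgroup.subset_closure ⟨1, 1, 0, by simp⟩
      -- A · σ^n(B) ⊆ I
      have hmain : ∀ b' ∈ AddSubgroup.closure GB, ∀ a' ∈ Submodule.span R GA,
          a' * (⇑σ)^[n] b' ∈ I := by
        intro b' hb'
        induction hb' using AddSubgroup.closure_induction with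
        | mem y hy =>
          obtain ⟨u, v, t, rfl⟩ := hy
          intro a' ha'
          induction ha' using Submodule.span_induction with
          | mem z hz =>
            obtain ⟨r, rfl⟩ := hz
            have heq : an * (⇑σ)^[n] r * (⇑σ)^[n] (u * (⇑σ)^[t] bm * v) =
                (an * (⇑σ)^[n] (r * u) * (⇑σ)^[n + t] bm) * (⇑σ)^[n] v := by
              rw [iter_mul, iter_mul, iter_mul, Function.iterate_add_apply]
              simp only [mul_assoc]
            rw [heq]
            exact (hImul _ (key (r * u) t) _).2
          | zero => rw [zero_mul]; exact hI0
          | add z w hz hw ihz ihw => rw [add_mul]; exact hIadd _ ihz _ ihw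
          | smul r z hz ihz => rw [smul_eq_mul, mul_assoc]; exact (hImul _ ihz _).1
        | zero =>
          intro a' _
          rw [iter_zero, mul_zero]; exact hI0
        | add y z hy hz ihy ihz =>
          intro a' ha'
          rw [iter_add, mul_add]
          exact hIadd _ (ihy a' ha') _ (ihz a' ha')
        | neg y hy ihy =>
          intro a' ha'
          rw [iter_neg, mul_neg]
          exact hIneg _ (ihy a' ha')
      rcases hcond A B hAleft hBideal hBstab ⟨n, fun a' ha' b' hb' => hmain b' hb' a' ha'⟩ with
        h | h
      · exact hanI (h hanA)
      · exact hbmI (h hbmB)
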